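/- (De Giorgi–Poincaré inequality.) For every N ≥ 1 there exists a constant C = C(N) > 0 such that the following holds. Let r > 0, let K_r ⊂ ℝ^N be an axis-parallel open cube of side length r, let u be continuously differentiable on a neighborhood of the closure of K_r, and let k, h ∈ ℝ with k ≤ h. Then (h − k) · |{x ∈ K_r : u(x) ≤ k}| · |{x ∈ K_r : u(x) ≥ h}| ≤ C(N)·r^{N+1} · ∫_{{x ∈ K_r : k < u(x) ≤ h}} ‖∇u(x)‖ dx. -/

import Mathlib

set_option maxHeartbeats 2000000

open MeasureTheory Set

section Aux

variable {N : ℕ}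
local notation "E" => EuclideanSpace ℝ (Fin N)

lemma dgp_oneD {f f' : ℝ → ℝ} (hder : ∀ t ∈ Icc (0:ℝ) 1, HasDerivAt f (f' t) t)
    (hcont : ContinuousOn f' (Icc 0 1)) {k h : ℝ} (hf0 : f 0 ≤ k) (hf1 : h ≤ f 1)
    (φ : ℝ → ENNReal)
    (hφ : ∀ t ∈ Icc (0:ℝ) 1, k < f t → f t < h → ENNReal.ofReal |f' t| ≤ φ t) :
    ENNReal.ofReal (h - k) ≤ ∫⁻ t in Icc (0:ℝ) 1, φ t := by
  have hfc : ContinuousOn f (Icc 0 1) :=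
    fun t ht => (hder t ht).continuousAt.continuousWithinAt
  set T : Set ℝ := {t ∈ Icc (0:ℝ) 1 | h ≤ f t} with hT
  have hTclosed : IsClosed T := by
    have : T = Icc (0:ℝ) 1 ∩ f ⁻¹' Ici h := by ext t; simp [hT, and_comm]
    rw [this]
    exact hfc.preimage_isClosed_of_isClosed isClosed_Icc isClosed_Ici
  have hTne : T.Nonempty := ⟨1, ⟨by norm_num, hf1⟩⟩
  have hTbdd : BddBelow T := ⟨0, fun t ht => ht.1.1⟩
  set b := sInf T with hbdef
  have hbT : b ∈ T := hTclosed.csInf_mem hTne hTbdd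
  have hb01 : b ∈ Icc (0:ℝ) 1 := hbT.1
  have hfb : h ≤ f b := hbT.2
  have hlt : ∀ t, 0 ≤ t → t < b → f t < h := by
    intro t ht0 htb
    by_contra hc
    exact absurd (csInf_le hTbdd ⟨⟨ht0, htb.le.trans hb01.2⟩, not_lt.1 hc⟩) (not_le.2 htb)
  set T' : Set ℝ := {t ∈ Icc (0:ℝ) b | f t ≤ k} with hT'
  have hT'closed : IsClosed T' := by
    have : T' = Icc (0:ℝ) b ∩ f ⁻¹' Iic k := by ext t; simp [hT', and_comm]
    rw [this]
    exact (hfc.mono (Icc_subset_Icc le_rfl hb01.2)).preimage_isClosed_of_isClosed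
      isClosed_Icc isClosed_Iic
  have hT'ne : T'.Nonempty := ⟨0, ⟨⟨le_rfl, hb01.1⟩, hf0⟩⟩
  have hT'bdd : BddAbove T' := ⟨b, fun t ht => ht.1.2⟩
  set a := sSup T' with hadef
  have haT' : a ∈ T' := hT'closed.csSup_mem hT'ne hT'bdd
  have ha0b : a ∈ Icc (0:ℝ) b := haT'.1
  have hfa : f a ≤ k := haT'.2
  have hgt : ∀ t, a < t → t ≤ b → k < f t := by
    intro t hat htb
    by_contra hc
    exact absurd (le_csSup hT'bdd ⟨⟨ha0b.1.trans hat.le, htb⟩, not_lt.1 hc⟩) (not_le.2 hat)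
  have hab : a ≤ b := ha0b.2
  have hsub : Icc a b ⊆ Icc (0:ℝ) 1 := Icc_subset_Icc ha0b.1 hb01.2
  have hftc : ∫ t in a..b, f' t = f b - f a := by
    apply intervalIntegral.integral_eq_sub_of_hasDerivAt
    · intro t ht
      rw [uIcc_of_le hab] at ht
      exact hder t (hsub ht)
    · apply ContinuousOn.intervalIntegrable
      rw [uIcc_of_le hab]
      exact hcont.mono hsub
  have habs_int : IntegrableOn (fun t => |f' t|) (Ioc a b) volume := by
    have : IntegrableOn f' (Icc a b) volume :=
      (hcont.mono hsub).integrableOn_Icc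
    exact (this.mono_set Ioc_subset_Icc_self).abs
  calc ENNReal.ofReal (h - k) ≤ ENNReal.ofReal (∫ t in Ioc a b, |f' t|) := by
        apply ENNReal.ofReal_le_ofReal
        have h1 : h - k ≤ f b - f a := by linarith
        have hint : IntegrableOn f' (Ioc a b) volume :=
          ((hcont.mono hsub).integrableOn_Icc).mono_set Ioc_subset_Icc_self
        have h2 : ∫ t in a..b, f' t ≤ ∫ t in Ioc a b, |f' t| := by
          rw [intervalIntegral.integral_of_le hab]
          exact setIntegral_mono_on hint habs_int measurableSet_Ioc fun t _ => le_abs_self _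
        linarith [hftc]
      _ = ∫⁻ t in Ioc a b, ENNReal.ofReal |f' t| := by
        rw [ofReal_integral_eq_lintegral_ofReal habs_int (ae_of_all _ fun t => abs_nonneg _)]
      _ = ∫⁻ t in Ioo a b, ENNReal.ofReal |f' t| := (setLIntegral_congr Ioo_ae_eq_Ioc).symm
      _ ≤ ∫⁻ t in Ioo a b, φ t := by
        apply setLIntegral_mono_ae' measurableSet_Ioo
        filter_upwards with t ht
        exact hφ t (⟨ha0b.1.trans ht.1.le, ht.2.le.trans hb01.2⟩)
          (hgt t ht.1 ht.2.le) (hlt t (ha0b.1.trans ht.1.le) ht.2)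
      _ ≤ ∫⁻ t in Icc (0:ℝ) 1, φ t := lintegral_mono_set (Ioo_subset_Icc_self.trans hsub)

lemma dgp_segment {u : E → ℝ} {U Q S : Set E} (hU : IsOpen U) (hQU : Q ⊆ U)
    (hQconv : Convex ℝ Q) (hu : ContDiffOn ℝ 1 u U)
    {k h : ℝ} {R : ℝ} (hR : 0 ≤ R)
    (hS : ∀ z, z ∈ Q → k < u z → u z ≤ h →
      ENNReal.ofReal ‖gradient u z‖ ≤ S.indicator (fun z => ENNReal.ofReal ‖gradient u z‖) z)
    {x y : E} (hx : x ∈ Q) (hy : y ∈ Q) (hxy : ‖y - x‖ ≤ R)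
    (hux : u x ≤ k) (huy : h ≤ u y) :
    ENNReal.ofReal (h - k) ≤ ∫⁻ t in Icc (0:ℝ) 1,
      ENNReal.ofReal R * S.indicator (fun z => ENNReal.ofReal ‖gradient u z‖)
        ((1 - t) • x + t • y) := by
  set γ : ℝ → E := fun t => x + t • (y - x) with hγdef
  have hγeq : ∀ t : ℝ, (1 - t) • x + t • y = γ t := by
    intro t
    simp only [hγdef, smul_sub, sub_smul, one_smul]
    abel
  have hγQ : ∀ t ∈ Icc (0:ℝ) 1, γ t ∈ Q := by
    intro t ht
    have := hQconv hx hy (by linarith [ht.1, ht.2] : (0:ℝ) ≤ 1 - t) ht.1 (by linarith)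
    rwa [hγeq t] at this
  have hdiff : ∀ t ∈ Icc (0:ℝ) 1, DifferentiableAt ℝ u (γ t) := fun t ht =>
    (hu.contDiffAt (hU.mem_nhds (hQU (hγQ t ht)))).differentiableAt one_ne_zero
  set f : ℝ → ℝ := fun t => u (γ t) with hfdef
  set f' : ℝ → ℝ := fun t => fderiv ℝ u (γ t) (y - x) with hf'def
  have hγder : ∀ t : ℝ, HasDerivAt γ (y - x) t := by
    intro t
    simpa [hγdef] using ((hasDerivAt_id t).smul_const (y - x)).const_add x
  have hder : ∀ t ∈ Icc (0:ℝ) 1, HasDerivAt f (f' t) t := fun t ht =>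
    ((hdiff t ht).hasFDerivAt).comp_hasDerivAt t (hγder t)
  have hγcont : Continuous γ := by
    apply continuous_const.add (continuous_id.smul continuous_const)
  have hfderiv_cont : ContinuousOn (fderiv ℝ u) U :=
    hu.continuousOn_fderiv_of_isOpen hU le_rfl
  have hcont : ContinuousOn f' (Icc 0 1) := by
    apply ContinuousOn.clm_apply
    · exact hfderiv_cont.comp hγcont.continuousOn fun t ht => hQU (hγQ t ht)
    · exact continuousOn_const
  have hgrad : ∀ z, ‖fderiv ℝ u z‖ = ‖gradient u z‖ := by
    intro z
    rw [gradient, (InnerProductSpace.toDual ℝ _).symm.norm_map]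
  have hf0 : f 0 ≤ k := by
    have : γ 0 = x := by simp [hγdef]
    simpa [hfdef, this]
  have hf1 : h ≤ f 1 := by
    have : γ 1 = y := by simp [hγdef]
    simpa [hfdef, this]
  have key := dgp_oneD hder hcont hf0 hf1
    (fun t => ENNReal.ofReal R * S.indicator (fun z => ENNReal.ofReal ‖gradient u z‖) (γ t))
    (by
      intro t ht h1 h2
      calc ENNReal.ofReal |f' t| ≤ ENNReal.ofReal (R * ‖gradient u (γ t)‖) := by
            apply ENNReal.ofReal_le_ofReal
            calc |f' t| ≤ ‖fderiv ℝ u (γ t)‖ * ‖y - x‖ := by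
                  have := (fderiv ℝ u (γ t)).le_opNorm (y - x)
                  rwa [Real.norm_eq_abs] at this
              _ ≤ ‖gradient u (γ t)‖ * R := by
                  rw [hgrad]
                  exact mul_le_mul le_rfl hxy (norm_nonneg _) (norm_nonneg _)
              _ = R * ‖gradient u (γ t)‖ := mul_comm _ _
        _ = ENNReal.ofReal R * ENNReal.ofReal ‖gradient u (γ t)‖ :=
            ENNReal.ofReal_mul hR
        _ ≤ ENNReal.ofReal R *
            S.indicator (fun z => ENNReal.ofReal ‖gradient u z‖) (γ t) := by
            gcongr
            exact hS (γ t) (hγQ t ht) h1 h2.le)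
  calc ENNReal.ofReal (h - k) ≤ _ := key
    _ = _ := by
        apply lintegral_congr
        intro t
        rw [hγeq t]

lemma dgp_scaling (G : E → ENNReal) (hG : Measurable G) (a : E) {t : ℝ} (ht : t ≠ 0) :
    ∫⁻ y, G (a + t • y) = ENNReal.ofReal |(t ^ N)⁻¹| * ∫⁻ z, G z := by
  have h1 : ∫⁻ z, G (a + z) ∂(Measure.map (fun y : E => t • y) volume)
      = ∫⁻ y, G (a + t • y) :=
    lintegral_map (f := fun z => G (a + z))
      ((hG.comp (measurable_const_add a) : Measurable fun z : E => G (a + z)))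
      (measurable_const_smul t)
  rw [← h1, Measure.map_addHaar_smul volume ht, lintegral_smul_measure,
    finrank_euclideanSpace_fin]
  congr 1
  exact lintegral_add_left_eq_self (fun z => G z) a

lemma dgp_per_t (G : E → ENNReal) (hG : Measurable G) {A B : Set E}
    {V : ENNReal} (hAV : volume A ≤ V) (hBV : volume B ≤ V)
    {t : ℝ} (ht0 : 0 ≤ t) (ht1 : t ≤ 1) :
    ∫⁻ x in A, ∫⁻ y in B, G ((1 - t) • x + t • y) ≤
      ENNReal.ofReal (2 ^ N) * V * ∫⁻ z, G z := by
  have hmem : Measurable fun p : E × E => G ((1 - t) • p.1 + t • p.2) :=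
    hG.comp ((measurable_fst.const_smul (1 - t)).add (measurable_snd.const_smul t))
  rcases le_or_gt (1/2 : ℝ) t with ht | ht
  · have htne : t ≠ 0 := by intro hc; rw [hc] at ht; norm_num at ht
    have hinner : ∀ x : E, ∫⁻ y in B, G ((1 - t) • x + t • y) ≤
        ENNReal.ofReal (2 ^ N) * ∫⁻ z, G z := by
      intro x
      calc ∫⁻ y in B, G ((1 - t) • x + t • y) ≤ ∫⁻ y, G ((1 - t) • x + t • y) :=
            lintegral_mono' Measure.restrict_le_self le_rfl
        _ = ENNReal.ofReal |(t ^ N)⁻¹| * ∫⁻ z, G z := dgp_scaling G hG _ htne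
        _ ≤ ENNReal.ofReal (2 ^ N) * ∫⁻ z, G z := by
            gcongr
            have htN : (0:ℝ) < t ^ N := pow_pos (by linarith) N
            rw [abs_of_pos (inv_pos.2 htN), inv_le_comm₀ htN (by positivity)]
            calc ((2:ℝ) ^ N)⁻¹ = (1/2) ^ N := by rw [one_div, inv_pow]
              _ ≤ t ^ N := pow_le_pow_left₀ (by norm_num) ht N
    calc ∫⁻ x in A, ∫⁻ y in B, G ((1 - t) • x + t • y) ≤
          ∫⁻ _x in A, ENNReal.ofReal (2 ^ N) * ∫⁻ z, G z :=
          lintegral_mono fun x => hinner x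
      _ = ENNReal.ofReal (2 ^ N) * (∫⁻ z, G z) * volume A := setLIntegral_const _ _
      _ ≤ ENNReal.ofReal (2 ^ N) * (∫⁻ z, G z) * V := by gcongr
      _ = ENNReal.ofReal (2 ^ N) * V * ∫⁻ z, G z := by ring
  · have htne : (1 - t) ≠ 0 := by intro hc; nlinarith [hc]
    have hswap : ∫⁻ x in A, ∫⁻ y in B, G ((1 - t) • x + t • y) =
        ∫⁻ y in B, ∫⁻ x in A, G ((1 - t) • x + t • y) :=
      lintegral_lintegral_swap hmem.aemeasurable
    have hinner : ∀ y : E, ∫⁻ x in A, G ((1 - t) • x + t • y) ≤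
        ENNReal.ofReal (2 ^ N) * ∫⁻ z, G z := by
      intro y
      have hcomm : ∀ x : E, (1 - t) • x + t • y = t • y + (1 - t) • x := fun x => add_comm _ _
      calc ∫⁻ x in A, G ((1 - t) • x + t • y) ≤ ∫⁻ x, G ((1 - t) • x + t • y) :=
            lintegral_mono' Measure.restrict_le_self le_rfl
        _ = ∫⁻ x, G (t • y + (1 - t) • x) := by
            apply lintegral_congr; intro x; rw [hcomm x]
        _ = ENNReal.ofReal |((1 - t) ^ N)⁻¹| * ∫⁻ z, G z := dgp_scaling G hG _ htne
        _ ≤ ENNReal.ofReal (2 ^ N) * ∫⁻ z, G z := by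
            gcongr
            have htN : (0:ℝ) < (1 - t) ^ N := pow_pos (by linarith) N
            rw [abs_of_pos (inv_pos.2 htN), inv_le_comm₀ htN (by positivity)]
            calc ((2:ℝ) ^ N)⁻¹ = (1/2) ^ N := by rw [one_div, inv_pow]
              _ ≤ (1 - t) ^ N := pow_le_pow_left₀ (by norm_num) (by linarith) N
    calc ∫⁻ x in A, ∫⁻ y in B, G ((1 - t) • x + t • y) =
          ∫⁻ y in B, ∫⁻ x in A, G ((1 - t) • x + t • y) := hswap
      _ ≤ ∫⁻ _y in B, ENNReal.ofReal (2 ^ N) * ∫⁻ z, G z :=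
          lintegral_mono fun y => hinner y
      _ = ENNReal.ofReal (2 ^ N) * (∫⁻ z, G z) * volume B := setLIntegral_const _ _
      _ ≤ ENNReal.ofReal (2 ^ N) * (∫⁻ z, G z) * V := by gcongr
      _ = ENNReal.ofReal (2 ^ N) * V * ∫⁻ z, G z := by ring

lemma dgp_norm_le {x y : E} {r : ℝ} (hr : 0 ≤ r) (hb : ∀ i, |y i - x i| ≤ r) :
    ‖y - x‖ ≤ Real.sqrt N * r := by
  rw [EuclideanSpace.norm_eq]
  have hb' : ∀ i, ‖(y - x) i‖ ^ 2 ≤ r ^ 2 := by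
    intro i
    calc ‖(y - x) i‖ ^ 2 = |y i - x i| ^ 2 := by
          rw [PiLp.sub_apply, Real.norm_eq_abs]
      _ ≤ r ^ 2 := by nlinarith [abs_nonneg (y i - x i), hb i]
  calc Real.sqrt (∑ i, ‖(y - x) i‖ ^ 2) ≤ Real.sqrt (∑ _i : Fin N, r ^ 2) :=
        Real.sqrt_le_sqrt (Finset.sum_le_sum fun i _ => hb' i)
    _ = Real.sqrt N * r := by
        rw [Finset.sum_const, Finset.card_univ, Fintype.card_fin, nsmul_eq_mul,
          Real.sqrt_mul (by positivity), Real.sqrt_sq hr]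

end Aux
theorem de_giorgi_poincare (N : ℕ) (hN : 1 ≤ N) :
    ∃ C : ℝ, 0 < C ∧
      ∀ (r : ℝ), 0 < r →
      ∀ c : EuclideanSpace ℝ (Fin N),
      ∀ (u : EuclideanSpace ℝ (Fin N) → ℝ) (U : Set (EuclideanSpace ℝ (Fin N))),
        IsOpen U →
        closure {x : EuclideanSpace ℝ (Fin N) | ∀ i, x i ∈ Ioo (c i) (c i + r)} ⊆ U →
        ContDiffOn ℝ 1 u U →
        ∀ k h : ℝ, k ≤ h →
          (h - k) *
              (volume {x : EuclideanSpace ℝ (Fin N) |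
                (∀ i, x i ∈ Ioo (c i) (c i + r)) ∧ u x ≤ k}).toReal *
              (volume {x : EuclideanSpace ℝ (Fin N) |
                (∀ i, x i ∈ Ioo (c i) (c i + r)) ∧ h ≤ u x}).toReal ≤
            C * r ^ (N + 1) *
              ∫ x in {x : EuclideanSpace ℝ (Fin N) |
                (∀ i, x i ∈ Ioo (c i) (c i + r)) ∧ k < u x ∧ u x ≤ h},
                ‖gradient u x‖ := by
  have hsqrtN : (0:ℝ) < Real.sqrt N :=
    Real.sqrt_pos.2 (by exact_mod_cast Nat.lt_of_lt_of_le Nat.zero_lt_one hN)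
  refine ⟨2 ^ N * Real.sqrt N, by positivity, ?_⟩
  intro r hr c u U hUopen hQU hu k h hkh
  have hk0 : (0:ℝ) ≤ h - k := sub_nonneg.2 hkh
  set Q : Set (EuclideanSpace ℝ (Fin N)) := {x | ∀ i, x i ∈ Ioo (c i) (c i + r)} with hQdef
  set A : Set (EuclideanSpace ℝ (Fin N)) :=
    {x | (∀ i, x i ∈ Ioo (c i) (c i + r)) ∧ u x ≤ k} with hAdef
  set B : Set (EuclideanSpace ℝ (Fin N)) :=
    {x | (∀ i, x i ∈ Ioo (c i) (c i + r)) ∧ h ≤ u x} with hBdef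
  set S : Set (EuclideanSpace ℝ (Fin N)) :=
    {x | (∀ i, x i ∈ Ioo (c i) (c i + r)) ∧ k < u x ∧ u x ≤ h} with hSdef
  have hQU' : Q ⊆ U := subset_closure.trans hQU
  -- basic facts about the cube
  have hQopen : IsOpen Q := by
    have : Q = ⋂ i, (EuclideanSpace.proj i) ⁻¹' Ioo (c i) (c i + r) := by
      ext x; simp [hQdef]
    rw [this]
    exact isOpen_iInter_of_finite fun i => isOpen_Ioo.preimage (EuclideanSpace.proj i).continuous
  have hQconv : Convex ℝ Q := by
    have : Q = ⋂ i, (EuclideanSpace.projₗ (𝕜 := ℝ) i) ⁻¹' Ioo (c i) (c i + r) := by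
      ext x; simp [hQdef, EuclideanSpace.projₗ]
    rw [this]
    exact convex_iInter fun i => (convex_Ioo _ _).linear_preimage (EuclideanSpace.projₗ i)
  have hQvol : volume Q = ENNReal.ofReal (r ^ N) := by
    have : Q = (MeasurableEquiv.toLp 2 (Fin N → ℝ)).symm ⁻¹'
        (univ.pi fun i => Ioo (c i) (c i + r)) := by
      ext x
      simp [hQdef, MeasurableEquiv.coe_toLp_symm]
    rw [this, MeasurePreserving.measure_preimage
      (EuclideanSpace.volume_preserving_symm_measurableEquiv_toLp (Fin N))
      ((MeasurableSet.univ_pi fun i => measurableSet_Ioo).nullMeasurableSet),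
      volume_pi_pi]
    simp [Real.volume_Ioo, ← ENNReal.ofReal_pow hr.le]
  -- measurability of the three sets
  have hucQ : ContinuousOn u Q := hu.continuousOn.mono hQU'
  have opn1 : IsOpen (Q ∩ u ⁻¹' Ioi k) := hucQ.isOpen_inter_preimage hQopen isOpen_Ioi
  have opn2 : IsOpen (Q ∩ u ⁻¹' Ioi h) := hucQ.isOpen_inter_preimage hQopen isOpen_Ioi
  have opn3 : IsOpen (Q ∩ u ⁻¹' Iio h) := hucQ.isOpen_inter_preimage hQopen isOpen_Iio
  have hAQ : A = Q \ (Q ∩ u ⁻¹' Ioi k) := by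
    ext x
    simp only [hAdef, hQdef, mem_setOf_eq, mem_diff, mem_inter_iff, mem_preimage,
      mem_Ioi, not_and, not_lt]
    constructor
    · rintro ⟨h1, h2⟩; exact ⟨h1, fun _ => h2⟩
    · rintro ⟨h1, h2⟩; exact ⟨h1, h2 h1⟩
  have hBQ : B = Q \ (Q ∩ u ⁻¹' Iio h) := by
    ext x
    simp only [hBdef, hQdef, mem_setOf_eq, mem_diff, mem_inter_iff, mem_preimage,
      mem_Iio, not_and, not_lt]
    constructor
    · rintro ⟨h1, h2⟩; exact ⟨h1, fun _ => h2⟩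
    · rintro ⟨h1, h2⟩; exact ⟨h1, h2 h1⟩
  have hSQ : S = (Q ∩ u ⁻¹' Ioi k) \ (Q ∩ u ⁻¹' Ioi h) := by
    ext x
    simp only [hSdef, hQdef, mem_setOf_eq, mem_diff, mem_inter_iff, mem_preimage,
      mem_Ioi, not_and, not_lt]
    constructor
    · rintro ⟨h1, h2, h3⟩; exact ⟨⟨h1, h2⟩, fun _ => h3⟩
    · rintro ⟨⟨h1, h2⟩, h3⟩; exact ⟨h1, h2, h3 h1⟩
  have hAmeas : MeasurableSet A := by
    rw [hAQ]; exact hQopen.measurableSet.diff opn1.measurableSet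
  have hBmeas : MeasurableSet B := by
    rw [hBQ]; exact hQopen.measurableSet.diff opn3.measurableSet
  have hSmeas : MeasurableSet S := by
    rw [hSQ]; exact opn1.measurableSet.diff opn2.measurableSet
  have hAsub : A ⊆ Q := fun x hx => hx.1
  have hBsub : B ⊆ Q := fun x hx => hx.1
  have hSsub : S ⊆ Q := fun x hx => hx.1
  have hAV : volume A ≤ ENNReal.ofReal (r ^ N) := hQvol ▸ measure_mono hAsub
  have hBV : volume B ≤ ENNReal.ofReal (r ^ N) := hQvol ▸ measure_mono hBsub
  have hSV : volume S ≤ ENNReal.ofReal (r ^ N) := hQvol ▸ measure_mono hSsub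
  -- the integrand
  set G : EuclideanSpace ℝ (Fin N) → ENNReal :=
    S.indicator (fun z => ENNReal.ofReal ‖gradient u z‖) with hGdef
  have hgradnorm : (fun z : EuclideanSpace ℝ (Fin N) => ‖gradient u z‖) =
      fun z => ‖fderiv ℝ u z‖ := by
    funext z
    rw [gradient, (InnerProductSpace.toDual ℝ _).symm.norm_map]
  have hnormmeas : Measurable fun z : EuclideanSpace ℝ (Fin N) => ‖gradient u z‖ := by
    rw [hgradnorm]; exact (measurable_fderiv ℝ u).norm
  have hgmeas : Measurable fun z : EuclideanSpace ℝ (Fin N) =>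
      ENNReal.ofReal ‖gradient u z‖ := hnormmeas.ennreal_ofReal
  have hGmeas : Measurable G := hgmeas.indicator hSmeas
  have hIS : ∫⁻ z, G z = ∫⁻ z in S, ENNReal.ofReal ‖gradient u z‖ :=
    lintegral_indicator hSmeas _
  -- finiteness of the integral
  have hQbdd : Bornology.IsBounded Q := by
    apply (Metric.isBounded_closedBall (x := c) (r := Real.sqrt N * r)).subset
    intro z hz
    rw [Metric.mem_closedBall, dist_eq_norm]
    apply dgp_norm_le hr.le
    intro i
    have h1 := (hz i).1
    have h2 := (hz i).2
    rw [abs_le]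
    constructor <;> [linarith; linarith]
  have hclos : IsCompact (closure Q) :=
    Metric.isCompact_of_isClosed_isBounded isClosed_closure hQbdd.closure
  obtain ⟨M, hM⟩ := hclos.exists_bound_of_continuousOn
    ((hu.continuousOn_fderiv_of_isOpen hUopen le_rfl).mono hQU)
  have hItop : ∫⁻ z, G z ≠ ⊤ := by
    have hle : ∫⁻ z, G z ≤ ENNReal.ofReal (max M 0) * ENNReal.ofReal (r ^ N) := by
      rw [hIS]
      calc ∫⁻ z in S, ENNReal.ofReal ‖gradient u z‖
          ≤ ∫⁻ _z in S, ENNReal.ofReal (max M 0) := by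
            apply setLIntegral_mono_ae' hSmeas
            filter_upwards with z hz
            apply ENNReal.ofReal_le_ofReal
            calc ‖gradient u z‖ = ‖fderiv ℝ u z‖ := congrFun hgradnorm z
              _ ≤ M := hM z (subset_closure (hSsub hz))
              _ ≤ max M 0 := le_max_left _ _
        _ = ENNReal.ofReal (max M 0) * volume S := setLIntegral_const _ _
        _ ≤ ENNReal.ofReal (max M 0) * ENNReal.ofReal (r ^ N) := by gcongr
    exact ne_top_of_le_ne_top
      (ENNReal.mul_ne_top ENNReal.ofReal_ne_top ENNReal.ofReal_ne_top) hle
  -- the segment estimate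
  set R : ℝ := Real.sqrt N * r with hRdef
  have hR0 : 0 ≤ R := by positivity
  have hseg : ∀ x ∈ A, ∀ y ∈ B, ENNReal.ofReal (h - k) ≤
      ∫⁻ t in Icc (0:ℝ) 1, ENNReal.ofReal R * G ((1 - t) • x + t • y) := by
    intro x hx y hy
    apply dgp_segment hUopen hQU' hQconv hu hR0
    · intro z hzQ hzk hzh
      have hzS : z ∈ S := ⟨hzQ, hzk, hzh⟩
      rw [indicator_of_mem hzS]
    · exact hAsub hx
    · exact hBsub hy
    · apply dgp_norm_le hr.le
      intro i
      have h1 := ((hAsub hx) i).1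
      have h2 := ((hAsub hx) i).2
      have h3 := ((hBsub hy) i).1
      have h4 := ((hBsub hy) i).2
      rw [abs_le]
      constructor <;> [linarith; linarith]
    · exact hx.2
    · exact hy.2
  -- the main chain of inequalities in `ℝ≥0∞`
  have hswap : ∫⁻ x in A, ∫⁻ y in B, ∫⁻ t in Icc (0:ℝ) 1, G ((1 - t) • x + t • y) =
      ∫⁻ t in Icc (0:ℝ) 1, ∫⁻ x in A, ∫⁻ y in B, G ((1 - t) • x + t • y) := by
    have s1 : ∀ x : EuclideanSpace ℝ (Fin N),
        ∫⁻ y in B, ∫⁻ t in Icc (0:ℝ) 1, G ((1 - t) • x + t • y) =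
        ∫⁻ t in Icc (0:ℝ) 1, ∫⁻ y in B, G ((1 - t) • x + t • y) := by
      intro x
      exact lintegral_lintegral_swap (Measurable.aemeasurable (hGmeas.comp
        (((measurable_const.sub measurable_snd).smul measurable_const).add
          (measurable_snd.smul measurable_fst))))
    rw [lintegral_congr s1]
    exact lintegral_lintegral_swap (Measurable.aemeasurable
      (Measurable.lintegral_prod_right' (hGmeas.comp
        (((measurable_const.sub measurable_fst.snd).smul measurable_fst.fst).add
          (measurable_fst.snd.smul measurable_snd)))))
  have hmain : ENNReal.ofReal (h - k) * volume A * volume B ≤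
      ENNReal.ofReal (2 ^ N * Real.sqrt N * r ^ (N + 1)) * ∫⁻ z, G z := by
    calc ENNReal.ofReal (h - k) * volume A * volume B
        = ∫⁻ _x in A, ∫⁻ _y in B, ENNReal.ofReal (h - k) := by
          rw [setLIntegral_const, setLIntegral_const]
          ring
      _ ≤ ∫⁻ x in A, ∫⁻ y in B, ∫⁻ t in Icc (0:ℝ) 1,
            ENNReal.ofReal R * G ((1 - t) • x + t • y) := by
          apply lintegral_mono_ae ((ae_restrict_iff' hAmeas).2 (ae_of_all _ fun x hx =>
            lintegral_mono_ae ((ae_restrict_iff' hBmeas).2 (ae_of_all _ fun y hy =>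
              hseg x hx y hy))))
      _ = ENNReal.ofReal R * ∫⁻ x in A, ∫⁻ y in B, ∫⁻ t in Icc (0:ℝ) 1,
            G ((1 - t) • x + t • y) := by
          rw [← lintegral_const_mul' (ENNReal.ofReal R) _ ENNReal.ofReal_ne_top]
          apply lintegral_congr
          intro x
          rw [← lintegral_const_mul' (ENNReal.ofReal R) _ ENNReal.ofReal_ne_top]
          apply lintegral_congr
          intro y
          rw [← lintegral_const_mul' (ENNReal.ofReal R) _ ENNReal.ofReal_ne_top]
      _ = ENNReal.ofReal R * ∫⁻ t in Icc (0:ℝ) 1, ∫⁻ x in A, ∫⁻ y in B,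
            G ((1 - t) • x + t • y) := by rw [hswap]
      _ ≤ ENNReal.ofReal R * ∫⁻ _t in Icc (0:ℝ) 1,
            (ENNReal.ofReal (2 ^ N) * ENNReal.ofReal (r ^ N) * ∫⁻ z, G z) := by
          refine mul_le_mul_right ?_ _
          apply setLIntegral_mono_ae' measurableSet_Icc
          filter_upwards with t ht
          exact dgp_per_t G hGmeas hAV hBV ht.1 ht.2
      _ = ENNReal.ofReal R * (ENNReal.ofReal (2 ^ N) * ENNReal.ofReal (r ^ N) *
            ∫⁻ z, G z) := by
          rw [setLIntegral_const, Real.volume_Icc]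
          norm_num
      _ = ENNReal.ofReal (2 ^ N * Real.sqrt N * r ^ (N + 1)) * ∫⁻ z, G z := by
          rw [← mul_assoc, ← mul_assoc, ← ENNReal.ofReal_mul hR0,
            ← ENNReal.ofReal_mul (by positivity)]
          congr 2
          rw [hRdef]
          ring
  -- convert to real numbers
  have hRHSne : ENNReal.ofReal (2 ^ N * Real.sqrt N * r ^ (N + 1)) * ∫⁻ z, G z ≠ ⊤ :=
    ENNReal.mul_ne_top ENNReal.ofReal_ne_top hItop
  have hfin := ENNReal.toReal_mono hRHSne hmain
  have hlink : (∫⁻ z, G z).toReal = ∫ x in S, ‖gradient u x‖ := by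
    rw [hIS, integral_eq_lintegral_of_nonneg_ae (ae_of_all _ fun x => norm_nonneg _)
      hnormmeas.aestronglyMeasurable]
  rw [ENNReal.toReal_mul, ENNReal.toReal_mul, ENNReal.toReal_mul,
    ENNReal.toReal_ofReal hk0, ENNReal.toReal_ofReal (by positivity), hlink] at hfin
  calc (h - k) * (volume A).toReal * (volume B).toReal ≤
        2 ^ N * Real.sqrt N * r ^ (N + 1) * ∫ x in S, ‖gradient u x‖ := hfin
    _ = 2 ^ N * Real.sqrt N * r ^ (N + 1) * ∫ x in S, ‖gradient u x‖ := rfl
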